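/- arXiv:1604.07315 — 3 statements merged into one kernel-verified Lean document; each statement's English description precedes it below -/
import Mathlib

section
/- Let (f, g) be a scalar admissible system with potential function U, let ε ∈ [0,1], and let x ∈ (0,1) be a point with g′(x) > 0. Then x is a fixed point of the single-system recursion, i.e. x = f(g(x); ε), if and only if x is a stationary point of the potential function, i.e. ∂U/∂x (x; ε) = 0. -/
open Set MeasureTheory intervalIntegral Filter Topology

/-- A scalar admissible system `(f, g)`: `f : [0,1] × [0,1] → [0,1]` (written `f x ε`),
`g : [0,1] → [0,1]`, with `f` strictly increasing in each argument on `(0,1]`,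
`g` strictly increasing on `(0,1]`, `f 0 ε = f x 0 = g 0 = 0`, and `f`, `g`
twice continuously differentiable on their domains. -/
structure ScalarAdmissible (f : ℝ → ℝ → ℝ) (g : ℝ → ℝ) : Prop where
  f_mem : ∀ x ∈ Icc (0:ℝ) 1, ∀ ε ∈ Icc (0:ℝ) 1, f x ε ∈ Icc (0:ℝ) 1
  g_mem : ∀ x ∈ Icc (0:ℝ) 1, g x ∈ Icc (0:ℝ) 1
  f_strictMono_x : ∀ ε ∈ Ioc (0:ℝ) 1, StrictMonoOn (fun x => f x ε) (Ioc (0:ℝ) 1)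
  f_strictMono_eps : ∀ x ∈ Ioc (0:ℝ) 1, StrictMonoOn (fun ε => f x ε) (Ioc (0:ℝ) 1)
  g_strictMono : StrictMonoOn g (Ioc (0:ℝ) 1)
  f_zero_x : ∀ ε ∈ Icc (0:ℝ) 1, f 0 ε = 0
  f_zero_eps : ∀ x ∈ Icc (0:ℝ) 1, f x 0 = 0
  g_zero : g 0 = 0
  f_contDiff : ContDiffOn ℝ 2 (fun p : ℝ × ℝ => f p.1 p.2) (Icc 0 1 ×ˢ Icc 0 1)
  g_contDiff : ContDiffOn ℝ 2 g (Icc (0:ℝ) 1)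

/-- `G(x) = ∫₀ˣ g(z) dz`. -/
noncomputable def bigG (g : ℝ → ℝ) (x : ℝ) : ℝ := ∫ z in (0:ℝ)..x, g z

/-- `F(x; ε) = ∫₀ˣ f(z; ε) dz`. -/
noncomputable def bigF (f : ℝ → ℝ → ℝ) (x ε : ℝ) : ℝ := ∫ z in (0:ℝ)..x, f z ε

/-- The potential function `U(x; ε) = x g(x) − G(x) − F(g(x); ε)`. -/
noncomputable def potentialU (f : ℝ → ℝ → ℝ) (g : ℝ → ℝ) (x ε : ℝ) : ℝ :=
  x * g x - bigG g x - bigF f (g x) ε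

/-- `u(ε) = sup{ x̃ ∈ [0,1] : f(g(x); ε) < x for all x ∈ (0, x̃) }`. -/
noncomputable def minUnstable (f : ℝ → ℝ → ℝ) (g : ℝ → ℝ) (ε : ℝ) : ℝ :=
  sSup {x' : ℝ | x' ∈ Icc (0:ℝ) 1 ∧ ∀ x ∈ Ioo (0:ℝ) x', f (g x) ε < x}

/-- The potential threshold
`ε* = sup{ ε ∈ [0,1] : u(ε) > 0 and min_{x ∈ [u(ε),1]} U(x; ε) > 0 }`. -/
noncomputable def potentialThreshold (f : ℝ → ℝ → ℝ) (g : ℝ → ℝ) : ℝ :=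
  sSup {ε : ℝ | ε ∈ Icc (0:ℝ) 1 ∧ 0 < minUnstable f g ε ∧
    ∀ x ∈ Icc (minUnstable f g ε) 1, 0 < potentialU f g x ε}

/-- `x ∈ (0,1)` with `g′(x) > 0` is a fixed point of the single-system recursion
`x = f(g(x); ε)` iff it is a stationary point of the potential function. -/
theorem fixedPoint_iff_stationary (f : ℝ → ℝ → ℝ) (g : ℝ → ℝ)
    (hadm : ScalarAdmissible f g) (ε : ℝ) (hε : ε ∈ Icc (0:ℝ) 1)
    (x : ℝ) (hx : x ∈ Ioo (0:ℝ) 1) (hg : 0 < deriv g x) :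
    x = f (g x) ε ↔ deriv (fun y => potentialU f g y ε) x = 0 := by
  obtain ⟨hx0, hx1⟩ := hx
  have hxI : x ∈ Icc (0:ℝ) 1 := ⟨hx0.le, hx1.le⟩
  have hIccnhds : Icc (0:ℝ) 1 ∈ 𝓝 x := Icc_mem_nhds hx0 hx1
  -- g continuous on Icc
  have hgcont : ContinuousOn g (Icc (0:ℝ) 1) := hadm.g_contDiff.continuousOn
  -- g x ∈ Ioo 0 1
  have hgx0 : 0 < g x := by
    have h2 : g (x/2) < g x :=
      hadm.g_strictMono ⟨by linarith, by linarith⟩ ⟨hx0, hx1.le⟩ (by linarith)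
    have := (hadm.g_mem (x/2) ⟨by linarith, by linarith⟩).1
    linarith
  have hgx1 : g x < 1 := by
    have h2 : g x < g 1 := hadm.g_strictMono ⟨hx0, hx1.le⟩ ⟨one_pos, le_refl 1⟩ hx1
    have := (hadm.g_mem 1 ⟨zero_le_one, le_refl 1⟩).2
    linarith
  have hgxI : Icc (0:ℝ) 1 ∈ 𝓝 (g x) := Icc_mem_nhds hgx0 hgx1
  -- g differentiable at x
  have hgdiff : HasDerivAt g (deriv g x) x :=
    (((hadm.g_contDiff.differentiableOn (by norm_num)).differentiableAt hIccnhds)).hasDerivAt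
  -- fε := fun z => f z ε continuous on Icc 0 1
  have hfcont : ContinuousOn (fun z => f z ε) (Icc (0:ℝ) 1) := by
    have : ContinuousOn (fun p : ℝ × ℝ => f p.1 p.2) (Icc 0 1 ×ˢ Icc 0 1) :=
      hadm.f_contDiff.continuousOn
    exact this.comp (ContinuousOn.prodMk continuousOn_id continuousOn_const : ContinuousOn (fun z : ℝ => (z, ε)) _) (fun z hz => ⟨hz, hε⟩)
  -- deriv of bigG at x
  have hG : HasDerivAt (bigG g) (g x) x := by
    apply intervalIntegral.integral_hasDerivAt_right
    · exact (hgcont.mono (by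
        rw [uIcc_of_le hx0.le]; exact Icc_subset_Icc le_rfl hx1.le)).intervalIntegrable
    · exact ContinuousOn.stronglyMeasurableAtFilter isOpen_Ioo
        (hgcont.mono Ioo_subset_Icc_self) x ⟨hx0, hx1⟩
    · exact hgcont.continuousAt hIccnhds
  -- deriv of bigF at g x
  have hF : HasDerivAt (fun y => bigF f y ε) (f (g x) ε) (g x) := by
    apply intervalIntegral.integral_hasDerivAt_right
    · exact (hfcont.mono (by
        rw [uIcc_of_le hgx0.le]; exact Icc_subset_Icc le_rfl hgx1.le)).intervalIntegrable
    · exact ContinuousOn.stronglyMeasurableAtFilter isOpen_Ioo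
        (hfcont.mono Ioo_subset_Icc_self) (g x) ⟨hgx0, hgx1⟩
    · exact hfcont.continuousAt hgxI
  have hU : HasDerivAt (fun y => potentialU f g y ε)
      (deriv g x * (x - f (g x) ε)) x := by
    have h1 : HasDerivAt (fun y => y * g y) (g x + x * deriv g x) x := by
      exact ((hasDerivAt_id' x).mul hgdiff).congr_deriv (by ring)
    have h3 : HasDerivAt (fun y => bigF f (g y) ε) (f (g x) ε * deriv g x) x :=
      hF.comp x hgdiff
    have := (h1.sub hG).sub h3
    exact this.congr_deriv (by ring)
  rw [hU.deriv]
  constructor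
  · intro h; rw [← h]; ring
  · intro h
    rcases mul_eq_zero.mp h with h' | h'
    · exact absurd h' hg.ne'
    · linarith
end

section
/- Define D(p) = p⁶ − 4p⁵ + 6p⁴ − 6p³ + 5p² − 2p + 1 and N₁(p) = p·(p⁵ − 4p⁴ + 6p³ − 5p² + 2p + 1). Then for all p ∈ [0,1]: (a) D(p) > 0; (b) D(p) − N₁(p) = (1 − p)³, so that f₁(p) := N₁(p)/D(p) = 1 − (1−p)³/D(p); (c) 0 ≤ f₁(p) ≤ 1 with f₁(0) = 0 and f₁(1) = 1; (d) f₁ is monotonically nondecreasing on [0,1]. -/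
open Set

/-- Denominator of the BCJR transfer functions of the rate-2/3 recursive systematic
convolutional encoder with `G(D) = [[1, 0, 1/(1+D)], [0, 1, D/(1+D)]]`. -/
noncomputable def Dden (p : ℝ) : ℝ :=
  p ^ 6 - 4 * p ^ 5 + 6 * p ^ 4 - 6 * p ^ 3 + 5 * p ^ 2 - 2 * p + 1

/-- Numerator of the systematic-bit transfer function. -/
noncomputable def N₁ (p : ℝ) : ℝ :=
  p * (p ^ 5 - 4 * p ^ 4 + 6 * p ^ 3 - 5 * p ^ 2 + 2 * p + 1)

/-- Extrinsic erasure-probability transfer function, for the systematic output bits,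
of the BCJR decoder on the BEC, at equal input erasure probability `p`. -/
noncomputable def f₁ (p : ℝ) : ℝ := N₁ p / Dden p

/-- The denominator is a perfect square. -/
lemma Dden_sq (p : ℝ) : Dden p = (1 - p * (1 - p) ^ 2) ^ 2 := by unfold Dden; ring

lemma q_pos' {p : ℝ} (h0 : 0 ≤ p) (h1 : p ≤ 1) : 0 < 1 - p * (1 - p) ^ 2 := by
  nlinarith [sq_nonneg (1 - p), mul_nonneg h0 (sq_nonneg (1 - p))]

lemma Dden_pos' {p : ℝ} (h0 : 0 ≤ p) (h1 : p ≤ 1) : 0 < Dden p := by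
  rw [Dden_sq]; exact pow_pos (q_pos' h0 h1) 2

/-- The key two-variable certificate for monotonicity. -/
lemma Gnonneg' {u v : ℝ} (hv : 0 ≤ v) (hu : u ≤ 1) (hvu : v ≤ u) :
    0 ≤ (1 - v^2 + v^3)^2 * (u^2 + u*v + v^2)
      + v^3 * (u + v - u^2 - u*v - v^2) * ((1 - u^2 + u^3) + (1 - v^2 + v^3)) := by
  have hu0 : 0 ≤ u := hv.trans hvu
  have hv1 : v ≤ 1 := hvu.trans hu
  have ht0 : 0 ≤ u * v := mul_nonneg hu0 hv
  have ht1 : u * v ≤ 1 := mul_le_one₀ hu hv hv1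
  nlinarith [sq_nonneg (u - v), mul_nonneg (mul_nonneg (pow_nonneg ht0 3) (add_nonneg hu0 hv))
      (by linarith : (0:ℝ) ≤ 2 - u - v),
    mul_nonneg ht0 (sub_nonneg.2 ht1), mul_nonneg (mul_nonneg ht0 ht0) (sub_nonneg.2 ht1),
    mul_nonneg (pow_nonneg ht0 3) (sub_nonneg.2 ht1)]

lemma N₁_nonneg' {p : ℝ} (h0 : 0 ≤ p) (h1 : p ≤ 1) : 0 ≤ N₁ p := by
  unfold N₁
  nlinarith [mul_nonneg h0 (sq_nonneg (1 - p)), sq_nonneg (1 - p), sq_nonneg p,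
    mul_nonneg (mul_nonneg h0 h0) (sq_nonneg (1 - p)),
    mul_nonneg h0 (mul_nonneg (sub_nonneg.2 h1) (sq_nonneg (1 - p)))]

/-- Properties of `f₁`: (a) `D(p) > 0`; (b) `D(p) − N₁(p) = (1−p)³`, so
`f₁(p) = 1 − (1−p)³/D(p)`; (c) `0 ≤ f₁(p) ≤ 1` with `f₁(0) = 0`, `f₁(1) = 1`;
(d) `f₁` is monotonically nondecreasing on `[0,1]`. -/
theorem f₁_properties :
    (∀ p ∈ Icc (0:ℝ) 1, 0 < Dden p) ∧
    (∀ p ∈ Icc (0:ℝ) 1, Dden p - N₁ p = (1 - p) ^ 3 ∧ f₁ p = 1 - (1 - p) ^ 3 / Dden p) ∧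
    (∀ p ∈ Icc (0:ℝ) 1, 0 ≤ f₁ p ∧ f₁ p ≤ 1) ∧ f₁ 0 = 0 ∧ f₁ 1 = 1 ∧
    MonotoneOn f₁ (Icc (0:ℝ) 1) := by
  have hDpos : ∀ p ∈ Icc (0:ℝ) 1, 0 < Dden p := fun p hp => Dden_pos' hp.1 hp.2
  have hsub : ∀ p : ℝ, Dden p - N₁ p = (1 - p) ^ 3 := by
    intro p; unfold Dden N₁; ring
  have hform : ∀ p ∈ Icc (0:ℝ) 1, f₁ p = 1 - (1 - p) ^ 3 / Dden p := by
    intro p hp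
    have hD := (hDpos p hp).ne'
    unfold f₁
    rw [eq_sub_iff_add_eq, ← add_div, ← hsub p]
    field_simp
    ring
  refine ⟨hDpos, fun p hp => ⟨hsub p, hform p hp⟩, ?_, ?_, ?_, ?_⟩
  · intro p hp
    have hD := hDpos p hp
    constructor
    · exact div_nonneg (N₁_nonneg' hp.1 hp.2) hD.le
    · rw [hform p hp]
      have : 0 ≤ (1 - p) ^ 3 / Dden p :=
        div_nonneg (pow_nonneg (by linarith [hp.2]) 3) hD.le
      linarith
  · unfold f₁ N₁ Dden; norm_num
  · unfold f₁ N₁ Dden; norm_num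
  · intro a ha b hb hab
    rw [hform a ha, hform b hb]
    have hDa := hDpos a ha
    have hDb := hDpos b hb
    have key : (1 - b) ^ 3 / Dden b ≤ (1 - a) ^ 3 / Dden a := by
      rw [div_le_div_iff₀ hDb hDa]
      have hG := Gnonneg' (v := 1 - b) (u := 1 - a) (by linarith [hb.2])
        (by linarith [ha.1]) (by linarith)
      have hfac : 0 ≤ ((1 - a) - (1 - b)) *
          ((1 - (1-b)^2 + (1-b)^3)^2 * ((1-a)^2 + (1-a)*(1-b) + (1-b)^2)
          + (1-b)^3 * ((1-a) + (1-b) - (1-a)^2 - (1-a)*(1-b) - (1-b)^2) *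
            ((1 - (1-a)^2 + (1-a)^3) + (1 - (1-b)^2 + (1-b)^3))) :=
        mul_nonneg (by linarith) hG
      unfold Dden
      nlinarith [hfac]
    linarith
end

section
/- Let (f, g) be a scalar admissible system with potential function U, and suppose g′(x) > 0 for all x ∈ (0,1). Let ε ∈ [0,1]. If ∂U/∂x (x; ε) > 0 for all x ∈ (0,1), then f(g(x); ε) < x for all x ∈ (0,1); consequently, for any initial value x^{(0)} ∈ [0,1), the sequence x^{(i)} = f(g(x^{(i−1)}); ε) is nonincreasing and converges to 0. -/
open Set MeasureTheory intervalIntegral Filter Topology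

private lemma fg_lt_of_derivU (f : ℝ → ℝ → ℝ) (g : ℝ → ℝ)
    (hadm : ScalarAdmissible f g)
    (hg' : ∀ x ∈ Ioo (0:ℝ) 1, 0 < deriv g x)
    (ε : ℝ) (hε : ε ∈ Icc (0:ℝ) 1)
    (hU : ∀ x ∈ Ioo (0:ℝ) 1, 0 < deriv (fun y => potentialU f g y ε) x) :
    ∀ x ∈ Ioo (0:ℝ) 1, f (g x) ε < x := by
  intro x hx
  have hxI : Icc (0:ℝ) 1 ∈ 𝓝 x := Icc_mem_nhds hx.1 hx.2
  set proj : ℝ → ℝ := fun z => max 0 (min z 1) with hproj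
  have hprojmem : ∀ z, proj z ∈ Icc (0:ℝ) 1 := by
    intro z
    constructor
    · exact le_max_left _ _
    · simp only [hproj, max_le_iff]
      exact ⟨zero_le_one, min_le_right _ _⟩
  have hprojeq : ∀ z ∈ Icc (0:ℝ) 1, proj z = z := by
    intro z hz
    simp only [hproj]
    rw [min_eq_left hz.2, max_eq_right hz.1]
  have hprojcont : Continuous proj :=
    continuous_const.max (continuous_id.min continuous_const)
  have hgc : ContinuousOn g (Icc (0:ℝ) 1) := hadm.g_contDiff.continuousOn
  have hfc : ContinuousOn (fun z => f z ε) (Icc (0:ℝ) 1) := by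
    have h1 : ContinuousOn (fun p : ℝ × ℝ => f p.1 p.2) (Icc 0 1 ×ˢ Icc 0 1) :=
      hadm.f_contDiff.continuousOn
    have h2 : Continuous (fun z : ℝ => ((z, ε) : ℝ × ℝ)) := by continuity
    exact h1.comp h2.continuousOn (fun z hz => ⟨hz, hε⟩)
  have hgt : Continuous (fun z => g (proj z)) :=
    hgc.comp_continuous hprojcont hprojmem
  have hft : Continuous (fun z => f (proj z) ε) :=
    hfc.comp_continuous hprojcont hprojmem
  have hgd : HasDerivAt g (deriv g x) x := by
    have : DifferentiableAt ℝ g x :=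
      (hadm.g_contDiff.contDiffAt hxI).differentiableAt (by norm_num)
    exact this.hasDerivAt
  set V : ℝ → ℝ := fun y =>
    y * g y - (∫ t in (0:ℝ)..y, g (proj t)) - (∫ t in (0:ℝ)..(g y), f (proj t) ε) with hV
  have hUV : (fun y => potentialU f g y ε) =ᶠ[𝓝 x] V := by
    filter_upwards [hxI] with y hy
    have hgy : g y ∈ Icc (0:ℝ) 1 := hadm.g_mem y hy
    have e1 : (∫ t in (0:ℝ)..y, g t) = ∫ t in (0:ℝ)..y, g (proj t) := by
      apply intervalIntegral.integral_congr
      intro t ht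
      rw [uIcc_of_le hy.1] at ht
      show g t = g (proj t)
      rw [hprojeq t ⟨ht.1, le_trans ht.2 hy.2⟩]
    have e2 : (∫ t in (0:ℝ)..(g y), f t ε) = ∫ t in (0:ℝ)..(g y), f (proj t) ε := by
      apply intervalIntegral.integral_congr
      intro t ht
      rw [uIcc_of_le hgy.1] at ht
      show f t ε = f (proj t) ε
      rw [hprojeq t ⟨ht.1, le_trans ht.2 hgy.2⟩]
    simp only [potentialU, bigG, bigF, hV]
    rw [e1, e2]
  have hprojx : proj x = x := hprojeq x ⟨hx.1.le, hx.2.le⟩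
  have hgxmem : g x ∈ Icc (0:ℝ) 1 := hadm.g_mem x ⟨hx.1.le, hx.2.le⟩
  have hprojgx : proj (g x) = g x := hprojeq _ hgxmem
  have hVd : HasDerivAt V ((x - f (g x) ε) * deriv g x) x := by
    have h1 : HasDerivAt (fun y => y * g y) (1 * g x + x * deriv g x) x :=
      (hasDerivAt_id x).mul hgd
    have h2 : HasDerivAt (fun y => ∫ t in (0:ℝ)..y, g (proj t)) (g (proj x)) x :=
      (hgt.integral_hasStrictDerivAt 0 x).hasDerivAt
    have h3' : HasDerivAt (fun u => ∫ t in (0:ℝ)..u, f (proj t) ε) (f (proj (g x)) ε) (g x) :=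
      (hft.integral_hasStrictDerivAt 0 (g x)).hasDerivAt
    have h3 : HasDerivAt (fun y => ∫ t in (0:ℝ)..(g y), f (proj t) ε)
        (f (proj (g x)) ε * deriv g x) x := h3'.comp x hgd
    have := (h1.sub h2).sub h3
    rw [hprojx, hprojgx] at this
    exact this.congr_deriv (by ring)
  have hderiv : deriv (fun y => potentialU f g y ε) x = (x - f (g x) ε) * deriv g x := by
    rw [hUV.deriv_eq, hVd.deriv]
  have hpos := hU x hx
  rw [hderiv] at hpos
  have hgp := hg' x hx
  nlinarith

/-- If `g′ > 0` on `(0,1)` and `∂U/∂x(x; ε) > 0` for all `x ∈ (0,1)`, then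
`f(g(x); ε) < x` for all `x ∈ (0,1)`; consequently, for any initial value
`x⁽⁰⁾ ∈ [0,1)`, the density-evolution sequence `x⁽ⁱ⁾ = f(g(x⁽ⁱ⁻¹⁾); ε)` is
nonincreasing and converges to `0`. -/
theorem de_converges_below_bp (f : ℝ → ℝ → ℝ) (g : ℝ → ℝ)
    (hadm : ScalarAdmissible f g)
    (hg' : ∀ x ∈ Ioo (0:ℝ) 1, 0 < deriv g x)
    (ε : ℝ) (hε : ε ∈ Icc (0:ℝ) 1)
    (hU : ∀ x ∈ Ioo (0:ℝ) 1, 0 < deriv (fun y => potentialU f g y ε) x) :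
    (∀ x ∈ Ioo (0:ℝ) 1, f (g x) ε < x) ∧
      ∀ x₀ ∈ Ico (0:ℝ) 1, ∀ x : ℕ → ℝ, x 0 = x₀ →
        (∀ i : ℕ, x (i + 1) = f (g (x i)) ε) →
        Antitone x ∧ Tendsto x atTop (𝓝 0) := by
  have key := fg_lt_of_derivU f g hadm hg' ε hε hU
  refine ⟨key, ?_⟩
  intro x₀ hx₀ x hx0 hrec
  -- one-step estimates
  have hstep : ∀ y : ℝ, 0 ≤ y → y < 1 → f (g y) ε ≤ y ∧ 0 ≤ f (g y) ε := by
    intro y hy0 hy1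
    have hgy : g y ∈ Icc (0:ℝ) 1 := hadm.g_mem y ⟨hy0, hy1.le⟩
    have hnn : 0 ≤ f (g y) ε := (hadm.f_mem _ hgy ε hε).1
    rcases eq_or_lt_of_le hy0 with h | h
    · refine ⟨?_, hnn⟩
      rw [← h, hadm.g_zero, hadm.f_zero_x ε hε]
    · exact ⟨(key y ⟨h, hy1⟩).le, hnn⟩
  have hbound : ∀ i, 0 ≤ x i ∧ x i ≤ x₀ := by
    intro i
    induction i with
    | zero => rw [hx0]; exact ⟨hx₀.1, le_refl _⟩
    | succ n ih =>
      rw [hrec n]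
      have h := hstep (x n) ih.1 (lt_of_le_of_lt ih.2 hx₀.2)
      exact ⟨h.2, le_trans h.1 ih.2⟩
  have hanti : Antitone x := by
    apply antitone_nat_of_succ_le
    intro n
    rw [hrec n]
    exact (hstep (x n) (hbound n).1 (lt_of_le_of_lt (hbound n).2 hx₀.2)).1
  refine ⟨hanti, ?_⟩
  have hbdd : BddBelow (Set.range x) := ⟨0, fun v ⟨i, hi⟩ => hi ▸ (hbound i).1⟩
  have hlim : Tendsto x atTop (𝓝 (⨅ i, x i)) := tendsto_atTop_ciInf hanti hbdd
  set L := ⨅ i, x i with hLdef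
  have hL0 : 0 ≤ L := le_ciInf (fun i => (hbound i).1)
  have hL1 : L < 1 := lt_of_le_of_lt (le_trans (ciInf_le hbdd 0) (hx0 ▸ le_refl x₀)) hx₀.2
  have hLmem : L ∈ Icc (0:ℝ) 1 := ⟨hL0, hL1.le⟩
  -- continuity of the iteration map on [0,1]
  have hgc : ContinuousOn g (Icc (0:ℝ) 1) := hadm.g_contDiff.continuousOn
  have hfc : ContinuousOn (fun z => f z ε) (Icc (0:ℝ) 1) := by
    have h1 : ContinuousOn (fun p : ℝ × ℝ => f p.1 p.2) (Icc 0 1 ×ˢ Icc 0 1) :=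
      hadm.f_contDiff.continuousOn
    have h2 : Continuous (fun z : ℝ => ((z, ε) : ℝ × ℝ)) := by continuity
    exact h1.comp h2.continuousOn (fun z hz => ⟨hz, hε⟩)
  have hcomp : ContinuousOn (fun y => f (g y) ε) (Icc (0:ℝ) 1) :=
    hfc.comp hgc (fun y hy => hadm.g_mem y hy)
  have hxin : ∀ i, x i ∈ Icc (0:ℝ) 1 := fun i =>
    ⟨(hbound i).1, le_trans (hbound i).2 hx₀.2.le⟩
  have hlim' : Tendsto x atTop (𝓝[Icc (0:ℝ) 1] L) :=
    tendsto_nhdsWithin_iff.2 ⟨hlim, Filter.Eventually.of_forall hxin⟩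
  have hlimf : Tendsto (fun i => f (g (x i)) ε) atTop (𝓝 (f (g L) ε)) :=
    (hcomp L hLmem).tendsto.comp hlim'
  have hlim2 : Tendsto (fun i => x (i + 1)) atTop (𝓝 L) :=
    hlim.comp (tendsto_add_atTop_nat 1)
  have hfix : f (g L) ε = L := by
    apply tendsto_nhds_unique _ hlim2
    exact hlimf.congr (fun i => (hrec i).symm)
  have hL : L = 0 := by
    by_contra h
    have hLpos : 0 < L := lt_of_le_of_ne hL0 (Ne.symm h)
    have := key L ⟨hLpos, hL1⟩
    rw [hfix] at this
    exact lt_irrefl L this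
  rw [hL] at hlim
  exact hlim
end
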